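/- (Upper bound for S²) Let {(p_i, q_i)}_{i∈I} be a finite family with p_i ∈ ℝ³ and q_i ∈ ℝ, let ε ≥ 0, let r^c be a unit vector in ℝ³ and σ ≥ 0. For each i set θ_i = ∠(r^c, p_i), t_i⁻ = −ε − ‖p_i‖·cos(max{θ_i − √2σ, 0}) + q_i, t_i⁺ = ε − ‖p_i‖·cos(min{θ_i + √2σ, π}) + q_i, s_i⁻ = −ε + ‖p_i‖·cos(min{θ_i + √2σ, π}) + q_i, and s_i⁺ = ε + ‖p_i‖·cos(max{θ_i − √2σ, 0}) + q_i. Then for every unit vector r ∈ ℝ³ such that ∠(r, r^c) ≤ √2σ or ∠(−r, r^c) ≤ √2σ, and every t ∈ ℝ, card{i ∈ I : |⟪r, p_i⟫ + t − q_i| ≤ ε} ≤ max( card{i ∈ I : t_i⁻ ≤ t ≤ t_i⁺}, card{i ∈ I : s_i⁻ ≤ t ≤ s_i⁺} ). -/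
import Mathlib


open InnerProductGeometry
open scoped RealInnerProductSpace

private lemma arccos_le_arccos' {x y : ℝ} (h : x ≤ y) : Real.arccos y ≤ Real.arccos x := by
  rw [Real.arccos_eq_pi_div_two_sub_arcsin, Real.arccos_eq_pi_div_two_sub_arcsin]
  exact sub_le_sub_left (Real.monotone_arcsin h) _

private lemma angle_triangle_unit {V : Type*} [NormedAddCommGroup V] [InnerProductSpace ℝ V]
    (u v w : V) (hu : ‖u‖ = 1) (hv : ‖v‖ = 1) (hw : ‖w‖ = 1) :
    angle u w ≤ angle u v + angle v w := by
  set α := angle u v with hα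
  set β := angle v w with hβ
  have hα0 : 0 ≤ α := angle_nonneg u v
  have hβ0 : 0 ≤ β := angle_nonneg v w
  by_cases hπ : α + β ≤ Real.pi
  · have huv : ⟪u, v⟫ = Real.cos α := by
      rw [hα, cos_angle, hu, hv]; ring
    have hvw : ⟪v, w⟫ = Real.cos β := by
      rw [hβ, cos_angle, hv, hw]; ring
    have hvu : ⟪v, u⟫ = Real.cos α := by rw [real_inner_comm]; exact huv
    have hwv : ⟪w, v⟫ = Real.cos β := by rw [real_inner_comm]; exact hvw
    have hnu : ‖u - Real.cos α • v‖ = Real.sin α := by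
      have h1 : ‖u - Real.cos α • v‖ ^ 2 = Real.sin α ^ 2 := by
        rw [← real_inner_self_eq_norm_sq]
        have hvv : ⟪v, v⟫ = 1 := by
          rw [real_inner_self_eq_norm_sq, hv]; norm_num
        have huu : ⟪u, u⟫ = 1 := by
          rw [real_inner_self_eq_norm_sq, hu]; norm_num
        have hs := Real.sin_sq_add_cos_sq α
        simp only [inner_sub_left, inner_sub_right, real_inner_smul_left,
          real_inner_smul_right, huu, hvv, huv, hvu]
        nlinarith [huv]
      have := Real.sin_nonneg_of_nonneg_of_le_pi hα0 (by linarith : α ≤ Real.pi)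
      nlinarith [norm_nonneg (u - Real.cos α • v)]
    have hnw : ‖w - Real.cos β • v‖ = Real.sin β := by
      have h1 : ‖w - Real.cos β • v‖ ^ 2 = Real.sin β ^ 2 := by
        rw [← real_inner_self_eq_norm_sq]
        have hvv : ⟪v, v⟫ = 1 := by
          rw [real_inner_self_eq_norm_sq, hv]; norm_num
        have hww : ⟪w, w⟫ = 1 := by
          rw [real_inner_self_eq_norm_sq, hw]; norm_num
        have hs := Real.sin_sq_add_cos_sq β
        simp only [inner_sub_left, inner_sub_right, real_inner_smul_left,
          real_inner_smul_right, hww, hvv, hwv, hvw]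
        nlinarith [hvw]
      have := Real.sin_nonneg_of_nonneg_of_le_pi hβ0 (by linarith : β ≤ Real.pi)
      nlinarith [norm_nonneg (w - Real.cos β • v)]
    have hip : ⟪u - Real.cos α • v, w - Real.cos β • v⟫
        = ⟪u, w⟫ - Real.cos α * Real.cos β := by
      have hvv : ⟪v, v⟫ = 1 := by
        rw [real_inner_self_eq_norm_sq, hv]; norm_num
      simp only [inner_sub_left, inner_sub_right, real_inner_smul_left,
        real_inner_smul_right, hvv, hvu, huv, hwv, hvw]
      ring
    have hcs : -(‖u - Real.cos α • v‖ * ‖w - Real.cos β • v‖)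
        ≤ ⟪u - Real.cos α • v, w - Real.cos β • v⟫ :=
      neg_le_of_abs_le (abs_real_inner_le_norm _ _)
    have hkey : Real.cos (α + β) ≤ ⟪u, w⟫ := by
      rw [Real.cos_add]
      rw [hnu, hnw, hip] at hcs
      linarith
    have : angle u w = Real.arccos ⟪u, w⟫ := by
      rw [angle, hu, hw]; norm_num
    rw [this]
    calc Real.arccos ⟪u, w⟫ ≤ Real.arccos (Real.cos (α + β)) := arccos_le_arccos' hkey
      _ = α + β := Real.arccos_cos (by linarith) hπ
  · linarith [angle_le_pi u w]

private lemma angle_triangle' {V : Type*} [NormedAddCommGroup V] [InnerProductSpace ℝ V]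
    (u v w : V) (hu : ‖u‖ = 1) (hv : ‖v‖ = 1) :
    angle u w ≤ angle u v + angle v w := by
  by_cases hw : w = 0
  · subst hw
    rw [angle_zero_right, angle_zero_right]
    linarith [angle_nonneg u v]
  · have hnorm : (0 : ℝ) < ‖w‖ := norm_pos_iff.mpr hw
    have h1 : angle u ((‖w‖⁻¹) • w) = angle u w :=
      angle_smul_right_of_pos u w (inv_pos.mpr hnorm)
    have h2 : angle v ((‖w‖⁻¹) • w) = angle v w :=
      angle_smul_right_of_pos v w (inv_pos.mpr hnorm)
    have h3 : ‖(‖w‖⁻¹) • w‖ = 1 := by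
      rw [norm_smul, norm_inv, norm_norm, inv_mul_cancel₀ (ne_of_gt hnorm)]
    rw [← h1, ← h2]
    exact angle_triangle_unit u v _ hu hv h3

/-- Key cos bounds: if `angle r rc ≤ δ` with `r, rc` unit, then for any `p`,
`cos (min (angle rc p + δ) π) ≤ cos (angle r p) ≤ cos (max (angle rc p - δ) 0)`. -/
private lemma cos_bounds {V : Type*} [NormedAddCommGroup V] [InnerProductSpace ℝ V]
    (r rc p : V) (hr : ‖r‖ = 1) (hrc : ‖rc‖ = 1) {δ : ℝ}
    (hangle : angle r rc ≤ δ) :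
    Real.cos (min (angle rc p + δ) Real.pi) ≤ Real.cos (angle r p) ∧
      Real.cos (angle r p) ≤ Real.cos (max (angle rc p - δ) 0) := by
  have h1 : angle r p ≤ angle r rc + angle rc p := angle_triangle' r rc p hr hrc
  have h2 : angle rc p ≤ angle rc r + angle r p := angle_triangle' rc r p hrc hr
  rw [angle_comm rc r] at h2
  have hub : angle r p ≤ min (angle rc p + δ) Real.pi :=
    le_min (by linarith) (angle_le_pi r p)
  have hlb : max (angle rc p - δ) 0 ≤ angle r p :=
    max_le (by linarith) (angle_nonneg r p)
  constructor
  · exact Real.cos_le_cos_of_nonneg_of_le_pi (angle_nonneg r p)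
      (min_le_right _ _) hub
  · exact Real.cos_le_cos_of_nonneg_of_le_pi (le_max_right _ _)
      (by linarith [angle_le_pi r p]) hlb

private lemma inner_eq_norm_mul_cos {V : Type*} [NormedAddCommGroup V] [InnerProductSpace ℝ V]
    (r p : V) (hr : ‖r‖ = 1) : ⟪r, p⟫ = ‖p‖ * Real.cos (angle r p) := by
  by_cases hp : p = 0
  · simp [hp]
  · have hnorm : (0 : ℝ) < ‖p‖ := norm_pos_iff.mpr hp
    rw [cos_angle, hr]
    field_simp

open Classical in
theorem upper_bound_sphere {I : Type*} [Fintype I]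
    (p : I → EuclideanSpace ℝ (Fin 3)) (q : I → ℝ) (ε : ℝ) (hε : 0 ≤ ε)
    (rc : EuclideanSpace ℝ (Fin 3)) (hrc : ‖rc‖ = 1) (σ : ℝ) (hσ : 0 ≤ σ) :
    ∀ r : EuclideanSpace ℝ (Fin 3), ‖r‖ = 1 →
      (angle r rc ≤ Real.sqrt 2 * σ ∨ angle (-r) rc ≤ Real.sqrt 2 * σ) →
      ∀ t : ℝ,
        (Finset.univ.filter fun i => |⟪r, p i⟫ + t - q i| ≤ ε).card ≤
          max
            (Finset.univ.filter fun i =>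
              -ε - ‖p i‖ * Real.cos (max (angle rc (p i) - Real.sqrt 2 * σ) 0) + q i ≤ t ∧
              t ≤ ε - ‖p i‖ * Real.cos (min (angle rc (p i) + Real.sqrt 2 * σ) Real.pi) + q i).card
            (Finset.univ.filter fun i =>
              -ε + ‖p i‖ * Real.cos (min (angle rc (p i) + Real.sqrt 2 * σ) Real.pi) + q i ≤ t ∧
              t ≤ ε + ‖p i‖ * Real.cos (max (angle rc (p i) - Real.sqrt 2 * σ) 0) + q i).card := by
  intro r hr hcase t
  rcases hcase with hc | hc
  · refine le_trans (Finset.card_le_card ?_) (le_max_left _ _)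
    intro i hi
    simp only [Finset.mem_filter, Finset.mem_univ, true_and] at hi ⊢
    rw [abs_le] at hi
    obtain ⟨hcl, hcu⟩ := cos_bounds r rc (p i) hr hrc hc
    have hip : ⟪r, p i⟫ = ‖p i‖ * Real.cos (angle r (p i)) :=
      inner_eq_norm_mul_cos r (p i) hr
    have hmul1 : ‖p i‖ * Real.cos (min (angle rc (p i) + Real.sqrt 2 * σ) Real.pi)
        ≤ ‖p i‖ * Real.cos (angle r (p i)) :=
      mul_le_mul_of_nonneg_left hcl (norm_nonneg _)
    have hmul2 : ‖p i‖ * Real.cos (angle r (p i))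
        ≤ ‖p i‖ * Real.cos (max (angle rc (p i) - Real.sqrt 2 * σ) 0) :=
      mul_le_mul_of_nonneg_left hcu (norm_nonneg _)
    constructor <;> [nlinarith [hi.1]; nlinarith [hi.2]]
  · refine le_trans (Finset.card_le_card ?_) (le_max_right _ _)
    intro i hi
    simp only [Finset.mem_filter, Finset.mem_univ, true_and] at hi ⊢
    rw [abs_le] at hi
    have hr' : ‖(-r : EuclideanSpace ℝ (Fin 3))‖ = 1 := by rwa [norm_neg]
    obtain ⟨hcl, hcu⟩ := cos_bounds (-r) rc (p i) hr' hrc hc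
    have hip : ⟪(-r : EuclideanSpace ℝ (Fin 3)), p i⟫ = ‖p i‖ * Real.cos (angle (-r) (p i)) :=
      inner_eq_norm_mul_cos (-r) (p i) hr'
    have hneg : ⟪r, p i⟫ = -(‖p i‖ * Real.cos (angle (-r) (p i))) := by
      rw [← hip, inner_neg_left]; ring
    have hmul1 : ‖p i‖ * Real.cos (min (angle rc (p i) + Real.sqrt 2 * σ) Real.pi)
        ≤ ‖p i‖ * Real.cos (angle (-r) (p i)) :=
      mul_le_mul_of_nonneg_left hcl (norm_nonneg _)
    have hmul2 : ‖p i‖ * Real.cos (angle (-r) (p i))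
        ≤ ‖p i‖ * Real.cos (max (angle rc (p i) - Real.sqrt 2 * σ) 0) :=
      mul_le_mul_of_nonneg_left hcu (norm_nonneg _)
    constructor <;> [nlinarith [hi.1]; nlinarith [hi.2]]
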